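/- Let (X, Y) be a random vector with values in ℝ^d × [0,∞) on a probability space, with E[Y²] < ∞. Fix x ∈ ℝ^d, r > 0 and M ≥ 0, and assume there is a measurable function m : B(x,r) × [0,∞) → [0, M] such that for every c ≥ 0 and every Borel set A ⊆ B(x,r): E[ Y² · 1{Y > c} · 1{X ∈ A} ] = ∫_A m(u, c) λ(du); assume moreover that for each c ≥ 0 the function u ↦ m(u, c) is continuous at x, and that m(x, c) → 0 as c → ∞. Let K : ℝ^d → [0,∞) be bounded and measurable with support contained in the closed ball of radius ρ > 0 centered at the origin. Let (a_n) be a sequence of positive reals with a_n → 0 and n a_n^d → ∞. Then for every η > 0: lim_{n → ∞} E[ a_n^{−d} K( (x − X)/a_n )² · Y² · 1{ K( (x − X)/a_n ) · Y > η (n a_n^d)^{1/2} } ] = 0. -/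

import Mathlib

open MeasureTheory Filter Topology

private lemma sqrt_tendsto_atTop' : Tendsto Real.sqrt atTop atTop := by
  rw [tendsto_atTop_atTop]
  intro b
  refine ⟨max 0 (b ^ 2), fun y hy => ?_⟩
  have hb2 : b ^ 2 ≤ y := le_trans (le_max_right _ _) hy
  calc b ≤ |b| := le_abs_self b
    _ = Real.sqrt (b ^ 2) := (Real.sqrt_sq_eq_abs b).symm
    _ ≤ Real.sqrt y := Real.sqrt_le_sqrt hb2

set_option maxHeartbeats 1000000 in
/-- Lindeberg-type vanishing condition for the kernel-weighted envelope: with a density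
version `m(u,c)` of the truncated second moment `E[Y² 1{Y > c} | X = u] g(u)` near `x`
(bounded by `M`, continuous in `u` at `x`, vanishing as `c → ∞`), a nonnegative bounded
kernel `K` supported in the closed ball of radius `ρ`, and a bandwidth sequence `a_n → 0`
with `n a_n^d → ∞`, one has for every `η > 0`:
`E[ a_n^{−d} K((x−X)/a_n)² Y² 1{K((x−X)/a_n) Y > η (n a_n^d)^{1/2}} ] → 0`. -/
theorem kernel_lindeberg_vanishing
    {Ω : Type*} [MeasurableSpace Ω] (μ : Measure Ω) [IsProbabilityMeasure μ]
    (d : ℕ) (hd : 1 ≤ d)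
    (X : Ω → EuclideanSpace ℝ (Fin d)) (Y : Ω → ℝ)
    (hX : Measurable X) (hY : Measurable Y) (hYpos : ∀ ω, 0 ≤ Y ω) (hY2 : MemLp Y 2 μ)
    (x : EuclideanSpace ℝ (Fin d)) (r : ℝ) (hr : 0 < r) (M : ℝ) (hM : 0 ≤ M)
    (m : EuclideanSpace ℝ (Fin d) → ℝ → ℝ)
    (hmmeas : Measurable (fun p : EuclideanSpace ℝ (Fin d) × ℝ => m p.1 p.2))
    (hmrange : ∀ u ∈ Metric.ball x r, ∀ c : ℝ, 0 ≤ c → m u c ∈ Set.Icc 0 M)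
    (hmdens : ∀ c : ℝ, 0 ≤ c →
      ∀ A : Set (EuclideanSpace ℝ (Fin d)), MeasurableSet A → A ⊆ Metric.ball x r →
        ∫ ω in X ⁻¹' A ∩ {ω | c < Y ω}, (Y ω) ^ 2 ∂μ = ∫ u in A, m u c ∂volume)
    (hmcont : ∀ c : ℝ, 0 ≤ c → ContinuousAt (fun u => m u c) x)
    (hmvanish : Tendsto (fun c => m x c) atTop (𝓝 0))
    (K : EuclideanSpace ℝ (Fin d) → ℝ)
    (hKmeas : Measurable K) (hKpos : ∀ u, 0 ≤ K u) (hKbdd : ∃ B : ℝ, ∀ u, K u ≤ B)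
    (ρ : ℝ) (hρ : 0 < ρ) (hKsupp : Function.support K ⊆ Metric.closedBall 0 ρ)
    (a : ℕ → ℝ) (hapos : ∀ n, 0 < a n)
    (ha0 : Tendsto a atTop (𝓝 0))
    (hna : Tendsto (fun n : ℕ => (n : ℝ) * a n ^ d) atTop atTop) :
    ∀ η : ℝ, 0 < η →
      Tendsto (fun n : ℕ => ∫ ω,
          (a n ^ d)⁻¹ * K ((a n)⁻¹ • (x - X ω)) ^ 2 * (Y ω) ^ 2 *
            (if η * Real.sqrt ((n : ℝ) * a n ^ d) < K ((a n)⁻¹ • (x - X ω)) * Y ω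
              then (1:ℝ) else 0) ∂μ)
        atTop (𝓝 0) := by
  intro η hη
  obtain ⟨B₀, hB₀⟩ := hKbdd
  set B : ℝ := max B₀ 1 with hBdef
  have hB1 : (1:ℝ) ≤ B := le_max_right _ _
  have hBpos : (0:ℝ) < B := lt_of_lt_of_le one_pos hB1
  have hKB : ∀ u, K u ≤ B := fun u => le_trans (hB₀ u) (le_max_left _ _)
  have hY2int : Integrable (fun ω => Y ω ^ 2) μ := hY2.integrable_sq
  set c : ℕ → ℝ := fun n => η * Real.sqrt ((n:ℝ) * a n ^ d) / B with hcdef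
  have hctend : Tendsto c atTop atTop :=
    ((sqrt_tendsto_atTop'.comp hna).const_mul_atTop hη).atTop_div_const hBpos
  have hZmeas : ∀ n : ℕ, Measurable (fun ω => K ((a n)⁻¹ • (x - X ω))) := fun n =>
    hKmeas.comp ((measurable_const.sub hX).const_smul (a n)⁻¹)
  rw [NormedAddCommGroup.tendsto_nhds_zero]
  intro ε hε
  set V : ℝ := (volume (Metric.ball (0 : EuclideanSpace ℝ (Fin d)) 1)).toReal with hVdef
  have hV0 : 0 ≤ V := ENNReal.toReal_nonneg
  set C : ℝ := B ^ 2 * ρ ^ d * V + 1 with hCdef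
  have hCpos : 0 < C := by positivity
  set ε' : ℝ := ε / C with hε'def
  have hε'pos : 0 < ε' := div_pos hε hCpos
  obtain ⟨c₀, hc₀lt, hc₀0⟩ :=
    ((hmvanish.eventually_lt_const hε'pos).and (eventually_ge_atTop (0:ℝ))).exists
  obtain ⟨δ, hδpos, hδ⟩ := Metric.eventually_nhds_iff.mp
    ((hmcont c₀ hc₀0).eventually_lt_const hc₀lt)
  have hevA : ∀ᶠ n in atTop, ρ * a n < min δ r := by
    have h0 : Tendsto (fun n => ρ * a n) atTop (𝓝 (ρ * 0)) := ha0.const_mul ρ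
    rw [mul_zero] at h0
    exact h0.eventually_lt_const (lt_min hδpos hr)
  have hevB : ∀ᶠ n in atTop, c₀ ≤ c n := hctend.eventually_ge_atTop c₀
  filter_upwards [hevA, hevB] with n hn1 hn2
  have hρa0 : 0 ≤ ρ * a n := mul_nonneg hρ.le (hapos n).le
  set An : Set (EuclideanSpace ℝ (Fin d)) := Metric.closedBall x (ρ * a n) with hAndef
  have hAmeas : MeasurableSet An := Metric.isClosed_closedBall.measurableSet
  have hAballr : An ⊆ Metric.ball x r := fun u hu =>
    Metric.mem_ball.mpr (lt_of_le_of_lt (Metric.mem_closedBall.mp hu)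
      (lt_of_lt_of_le hn1 (min_le_right _ _)))
  have hAδ : ∀ u ∈ An, m u c₀ < ε' := fun u hu =>
    hδ (lt_of_le_of_lt (Metric.mem_closedBall.mp hu) (lt_of_lt_of_le hn1 (min_le_left _ _)))
  set S : Set Ω := X ⁻¹' An ∩ {ω | c n < Y ω} with hSdef
  have hSmeas : MeasurableSet S := (hX hAmeas).inter (measurableSet_lt measurable_const hY)
  have hadpos : 0 < a n ^ d := pow_pos (hapos n) d
  set g : Ω → ℝ := fun ω => (a n ^ d)⁻¹ * B ^ 2 * Y ω ^ 2 with hgdef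
  set F : Ω → ℝ := fun ω =>
      (a n ^ d)⁻¹ * K ((a n)⁻¹ • (x - X ω)) ^ 2 * (Y ω) ^ 2 *
        (if η * Real.sqrt ((n : ℝ) * a n ^ d) < K ((a n)⁻¹ • (x - X ω)) * Y ω
          then (1:ℝ) else 0) with hFdef
  have hFnn : ∀ ω, 0 ≤ F ω := fun ω => by
    apply mul_nonneg
    · have := hKpos ((a n)⁻¹ • (x - X ω)); positivity
    · split <;> norm_num
  -- pointwise bound
  have hpt : ∀ ω, F ω ≤ S.indicator g ω := by
    intro ω
    by_cases hcond : η * Real.sqrt ((n : ℝ) * a n ^ d) < K ((a n)⁻¹ • (x - X ω)) * Y ω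
    · set z := (a n)⁻¹ • (x - X ω) with hzdef
      have hknn := hKpos z
      have hy := hYpos ω
      have hky_pos : 0 < K z * Y ω :=
        lt_of_le_of_lt (by positivity) hcond
      have hkne : K z ≠ 0 := by
        intro h
        rw [h, zero_mul] at hky_pos
        exact lt_irrefl _ hky_pos
      have hzρ : ‖z‖ ≤ ρ := by
        have := hKsupp hkne
        simpa [Metric.mem_closedBall, dist_zero_right] using this
      have hXA : X ω ∈ An := by
        have hnorm : ‖z‖ = (a n)⁻¹ * ‖x - X ω‖ := by
          rw [hzdef, norm_smul, Real.norm_eq_abs, abs_of_pos (inv_pos.mpr (hapos n))]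
        have h1 : ‖x - X ω‖ / a n ≤ ρ := by
          rw [div_eq_inv_mul]; rw [hnorm] at hzρ; exact hzρ
        have h2 : ‖x - X ω‖ ≤ ρ * a n := (div_le_iff₀ (hapos n)).mp h1
        simp only [hAndef, Metric.mem_closedBall, dist_eq_norm, ← norm_sub_rev x (X ω)]
        exact h2
      have hYc : c n < Y ω := by
        have h2 : K z * Y ω ≤ B * Y ω := mul_le_mul_of_nonneg_right (hKB z) hy
        have h3 : η * Real.sqrt ((n : ℝ) * a n ^ d) < B * Y ω := lt_of_lt_of_le hcond h2
        rw [hcdef]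
        rw [div_lt_iff₀ hBpos]
        linarith
      have hmem : ω ∈ S := ⟨hXA, hYc⟩
      rw [Set.indicator_of_mem hmem]
      show (a n ^ d)⁻¹ * K z ^ 2 * Y ω ^ 2 * (if _ then (1:ℝ) else 0) ≤ _
      rw [if_pos hcond, mul_one, hgdef]
      have hsq : K z ^ 2 * Y ω ^ 2 ≤ B ^ 2 * Y ω ^ 2 :=
        mul_le_mul_of_nonneg_right (pow_le_pow_left₀ hknn (hKB z) 2) (sq_nonneg _)
      calc (a n ^ d)⁻¹ * K z ^ 2 * Y ω ^ 2 = (a n ^ d)⁻¹ * (K z ^ 2 * Y ω ^ 2) := mul_assoc _ _ _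
        _ ≤ (a n ^ d)⁻¹ * (B ^ 2 * Y ω ^ 2) :=
            mul_le_mul_of_nonneg_left hsq (inv_nonneg.mpr hadpos.le)
        _ = (a n ^ d)⁻¹ * B ^ 2 * Y ω ^ 2 := (mul_assoc _ _ _).symm
    · show _ * (if _ then (1:ℝ) else 0) ≤ _
      rw [if_neg hcond, mul_zero]
      exact Set.indicator_nonneg (fun ω' _ => by positivity) ω
  -- integrability
  have hgint : Integrable g μ := hY2int.const_mul _
  have hFmeas : Measurable F := by
    apply Measurable.mul
    · exact (measurable_const.mul ((hZmeas n).pow_const 2)).mul (hY.pow_const 2)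
    · exact Measurable.ite (measurableSet_lt measurable_const ((hZmeas n).mul hY))
        measurable_const measurable_const
  have hFint : Integrable F μ := by
    refine hgint.mono' hFmeas.aestronglyMeasurable (ae_of_all _ fun ω => ?_)
    rw [Real.norm_of_nonneg (hFnn ω)]
    exact le_trans (hpt ω) (Set.indicator_le_self' (fun ω' _ => by positivity) ω)
  -- integral chain
  have hIle : ∫ ω, F ω ∂μ ≤ (a n ^ d)⁻¹ * B ^ 2 * ∫ ω in S, Y ω ^ 2 ∂μ := by
    have h1 : ∫ ω, F ω ∂μ ≤ ∫ ω, S.indicator g ω ∂μ :=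
      integral_mono hFint (hgint.indicator hSmeas) hpt
    rwa [integral_indicator hSmeas, hgdef, integral_const_mul] at h1
  have h2 : ∫ ω in S, Y ω ^ 2 ∂μ ≤ ∫ ω in X ⁻¹' An ∩ {ω | c₀ < Y ω}, Y ω ^ 2 ∂μ := by
    refine setIntegral_mono_set hY2int.integrableOn (ae_of_all _ fun ω => sq_nonneg _) ?_
    refine HasSubset.Subset.eventuallyLE fun ω hω => ⟨hω.1, lt_of_le_of_lt hn2 hω.2⟩
  have h3 : ∫ ω in X ⁻¹' An ∩ {ω | c₀ < Y ω}, Y ω ^ 2 ∂μ = ∫ u in An, m u c₀ ∂volume :=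
    hmdens c₀ hc₀0 An hAmeas hAballr
  have hvol : (volume An).toReal = (ρ * a n) ^ d * V := by
    rw [hAndef, Measure.addHaar_closedBall _ _ hρa0, finrank_euclideanSpace_fin,
      ENNReal.toReal_mul, ENNReal.toReal_ofReal (by positivity)]
  have h4 : ∫ u in An, m u c₀ ∂volume ≤ ε' * ((ρ * a n) ^ d * V) := by
    have hb : ‖∫ u in An, m u c₀ ∂volume‖ ≤ ε' * (volume An).toReal := by
      refine norm_setIntegral_le_of_norm_le_const measure_closedBall_lt_top
        (fun u hu => ?_)
      rw [Real.norm_of_nonneg ((hmrange u (hAballr hu) c₀ hc₀0).1)]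
      exact (hAδ u hu).le
    calc ∫ u in An, m u c₀ ∂volume ≤ ‖∫ u in An, m u c₀ ∂volume‖ := le_abs_self _
      _ ≤ ε' * (volume An).toReal := hb
      _ = ε' * ((ρ * a n) ^ d * V) := by rw [hvol]
  have hkey : (a n ^ d)⁻¹ * B ^ 2 * (ε' * ((ρ * a n) ^ d * V)) = ε' * (B ^ 2 * ρ ^ d * V) := by
    have hne : a n ^ d ≠ 0 := hadpos.ne'
    field_simp [mul_pow]
    ring
  have hfin : ∫ ω, F ω ∂μ ≤ ε' * (B ^ 2 * ρ ^ d * V) := by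
    calc ∫ ω, F ω ∂μ ≤ (a n ^ d)⁻¹ * B ^ 2 * ∫ ω in S, Y ω ^ 2 ∂μ := hIle
      _ ≤ (a n ^ d)⁻¹ * B ^ 2 * (ε' * ((ρ * a n) ^ d * V)) := by
          refine mul_le_mul_of_nonneg_left ?_ (by positivity)
          exact le_trans h2 (h3 ▸ h4)
      _ = ε' * (B ^ 2 * ρ ^ d * V) := hkey
  have hlt : ε' * (B ^ 2 * ρ ^ d * V) < ε :=
    calc ε' * (B ^ 2 * ρ ^ d * V) < ε' * C := by
          rw [hCdef]; exact mul_lt_mul_of_pos_left (lt_add_one _) hε'pos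
      _ = ε := div_mul_cancel₀ ε hCpos.ne'
  have hInn : 0 ≤ ∫ ω, F ω ∂μ := integral_nonneg hFnn
  show ‖∫ ω, F ω ∂μ‖ < ε
  rw [Real.norm_of_nonneg hInn]
  exact lt_of_le_of_lt hfin hlt
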